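/- Under the standing hypotheses, t_α(α_g(x)) = t_α(x) for every g ∈ G and every x ∈ D_{g⁻¹}. -/

import Mathlib

universe u

/-- A groupoid in the algebraic sense of Lawson: a non-empty set `G` with a
partially defined binary operation (here modeled by a total operation `mul`
whose value is only constrained when it is defined, i.e. when `d g = r h`),
an inversion `inv`, and domain/range maps `d`, `r`. -/
structure AlgGroupoid (G : Type u) where
  mul : G → G → G
  inv : G → G
  d : G → G
  r : G → G
  mul_assoc' : ∀ g h l, d g = r h → d h = r l → mul (mul g h) l = mul g (mul h l)
  mul_d : ∀ g, mul g (d g) = g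
  r_mul : ∀ g, mul (r g) g = g
  inv_mul : ∀ g, mul (inv g) g = d g
  mul_inv : ∀ g, mul g (inv g) = r g
  d_mul : ∀ g h, d g = r h → d (mul g h) = d h
  r_mul' : ∀ g h, d g = r h → r (mul g h) = r g
  d_inv : ∀ g, d (inv g) = r g
  r_inv : ∀ g, r (inv g) = d g
  inv_inv : ∀ g, inv (inv g) = g
  d_d : ∀ g, d (d g) = d g
  r_d : ∀ g, r (d g) = d g
  d_r : ∀ g, d (r g) = r g
  r_r : ∀ g, r (r g) = r g

/-- `e` is an identity element of the groupoid `𝔾`, i.e. an element of `G₀`. -/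
def AlgGroupoid.isId {G : Type u} (𝔾 : AlgGroupoid G) (e : G) : Prop := 𝔾.d e = e

instance {G : Type u} [DecidableEq G] (𝔾 : AlgGroupoid G) (e : G) : Decidable (𝔾.isId e) :=
  inferInstanceAs (Decidable (𝔾.d e = e))

/-- `D` is a two-sided ideal of `E` (both being subsets of an ambient
non-unital ring `T`). -/
structure IsIdealIn {T : Type u} [NonUnitalRing T] (D E : Set T) : Prop where
  subset : D ⊆ E
  zero_mem : (0 : T) ∈ D
  add_mem : ∀ ⦃x y : T⦄, x ∈ D → y ∈ D → x + y ∈ D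
  neg_mem : ∀ ⦃x : T⦄, x ∈ D → -x ∈ D
  mul_mem_left : ∀ ⦃x y : T⦄, x ∈ E → y ∈ D → x * y ∈ D
  mul_mem_right : ∀ ⦃x y : T⦄, x ∈ D → y ∈ E → x * y ∈ D

/-- `u` is a (two-sided) multiplicative identity element of the subset `D`. -/
def IsIdentityElem {T : Type u} [NonUnitalRing T] (u : T) (D : Set T) : Prop :=
  u ∈ D ∧ ∀ x ∈ D, u * x = x ∧ x * u = x

/-- A partial action `α = ({D_g}, {α_g})` of a groupoid `𝔾` on the ring whose
carrier is the subset `R` of the ambient non-unital ring `T` (take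
`R = Set.univ` for a partial action on `T` itself).  For each `g`, `D (r g)`
is an ideal of `R`, `D g` is an ideal of `D (r g)` and `act g` restricts to a
ring isomorphism from `D (inv g)` onto `D g`; moreover `act e` is the identity
of `D e` for identities `e`, and for composable `g, h` the map `act (mul g h)`
extends `act g ∘ act h` (whose domain is `(act h)⁻¹ (D (inv g) ∩ D h)`). -/
structure PartialGroupoidAction {G : Type u} (𝔾 : AlgGroupoid G) (T : Type u)
    [NonUnitalRing T] (R : Set T) where
  D : G → Set T
  act : G → T → T
  ideal_r : ∀ g, IsIdealIn (D (𝔾.r g)) R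
  ideal : ∀ g, IsIdealIn (D g) (D (𝔾.r g))
  bijOn : ∀ g, Set.BijOn (act g) (D (𝔾.inv g)) (D g)
  map_add : ∀ g, ∀ x ∈ D (𝔾.inv g), ∀ y ∈ D (𝔾.inv g), act g (x + y) = act g x + act g y
  map_mul : ∀ g, ∀ x ∈ D (𝔾.inv g), ∀ y ∈ D (𝔾.inv g), act g (x * y) = act g x * act g y
  act_id : ∀ e, 𝔾.isId e → ∀ x ∈ D e, act e x = x
  dom_cond : ∀ g h, 𝔾.d g = 𝔾.r h → ∀ x ∈ D (𝔾.inv h), act h x ∈ D (𝔾.inv g) →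
    x ∈ D (𝔾.inv (𝔾.mul g h))
  comp_cond : ∀ g h, 𝔾.d g = 𝔾.r h → ∀ x ∈ D (𝔾.inv h), act h x ∈ D (𝔾.inv g) →
    act g (act h x) = act (𝔾.mul g h) x

/-- The partial action `α` is global if, for all composable `g, h`, the
composite `α_g ∘ α_h` (taken on its largest possible domain) coincides with
`α_{gh}`; since both maps always agree on the domain of the composite, this
amounts to the equality of the two domains. -/
def PartialGroupoidAction.IsGlobal {G : Type u} {𝔾 : AlgGroupoid G} {T : Type u}
    [NonUnitalRing T] {R : Set T} (α : PartialGroupoidAction 𝔾 T R) : Prop :=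
  ∀ g h, 𝔾.d g = 𝔾.r h →
    {x | x ∈ α.D (𝔾.inv h) ∧ α.act h x ∈ α.D (𝔾.inv g)} = α.D (𝔾.inv (𝔾.mul g h))

/-- The subring `R^α` of invariants of `R` under the partial action `α`,
where `one g` denotes the identity element `1_g` of the ideal `D_g`. -/
def invariants {G : Type u} (𝔾 : AlgGroupoid G) {R : Type u} [Ring R]
    (α : PartialGroupoidAction 𝔾 R (Set.univ : Set R)) (one : G → R) : Set R :=
  {x : R | ∀ g : G, α.act g (x * one (𝔾.inv g)) = x * one g}

/-- The trace map `t_α : R → R`, `t_α(x) = ∑_{g ∈ G} α_g(x 1_{g⁻¹})`. -/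
def traceMap {G : Type u} [Fintype G] (𝔾 : AlgGroupoid G) {R : Type u} [Ring R]
    (α : PartialGroupoidAction 𝔾 R (Set.univ : Set R)) (one : G → R) (x : R) : R :=
  ∑ g : G, α.act g (x * one (𝔾.inv g))

/-- `R` is an `α`-partial Galois extension of `R^α`: there is a partial Galois
coordinate system `x_i, y_i ∈ R` with
`∑_i x_i α_g(y_i 1_{g⁻¹}) = δ_{e,g} 1_e` for all `e ∈ G₀`, `g ∈ G`. -/
def IsPartialGalois {G : Type u} [Fintype G] [DecidableEq G] (𝔾 : AlgGroupoid G)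
    {R : Type u} [Ring R] (α : PartialGroupoidAction 𝔾 R (Set.univ : Set R))
    (one : G → R) : Prop :=
  ∃ (n : ℕ) (xs ys : Fin n → R), ∀ g : G,
    ∑ i, xs i * α.act g (ys i * one (𝔾.inv g)) = if 𝔾.isId g then one g else 0

/-- **Lemma 4.2(ii)**: under the standing hypotheses,
`t_α(α_g(x)) = t_α(x)` for every `g ∈ G` and every `x ∈ D_{g⁻¹}`. -/
theorem traceMap_act_eq {G : Type u} [Nonempty G] [Fintype G]
    [DecidableEq G] (𝔾 : AlgGroupoid G) {R : Type u} [Ring R]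
    (α : PartialGroupoidAction 𝔾 R (Set.univ : Set R))
    (one : G → R) (hone : ∀ g, IsIdentityElem (one g) (α.D g))
    (hcentral : ∀ g (x : R), one g * x = x * one g)
    (horth : ∀ e f, 𝔾.isId e → 𝔾.isId f → e ≠ f → ∀ x ∈ α.D e, ∀ y ∈ α.D f, x * y = 0)
    (hunit : (1 : R) = ∑ e ∈ Finset.univ.filter (fun e => 𝔾.isId e), one e) :
    ∀ g : G, ∀ x ∈ α.D (𝔾.inv g), traceMap 𝔾 α one (α.act g x) = traceMap 𝔾 α one x := by
  intro g x hx
  -- act of anything on 0 is 0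
  have hzero : ∀ h : G, α.act h 0 = 0 := by
    intro h
    have h0 : (0 : R) ∈ α.D (𝔾.inv h) := (α.ideal (𝔾.inv h)).zero_mem
    have := α.map_add h 0 h0 0 h0
    simp only [add_zero] at this
    exact left_eq_add.mp this
  -- round trips
  have rt1 : ∀ k : G, ∀ z ∈ α.D k, α.act k (α.act (𝔾.inv k) z) = z := by
    intro k z hz
    have hz' : z ∈ α.D (𝔾.inv (𝔾.inv k)) := by rw [𝔾.inv_inv]; exact hz
    have hmem : α.act (𝔾.inv k) z ∈ α.D (𝔾.inv k) := (α.bijOn (𝔾.inv k)).mapsTo hz'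
    have hc := α.comp_cond k (𝔾.inv k) (𝔾.r_inv k).symm z hz' hmem
    rw [𝔾.mul_inv] at hc
    rw [hc]
    exact α.act_id (𝔾.r k) (𝔾.d_r k) z ((α.ideal k).subset hz)
  have rt2 : ∀ k : G, ∀ z ∈ α.D (𝔾.inv k), α.act (𝔾.inv k) (α.act k z) = z := by
    intro k z hz
    have := rt1 (𝔾.inv k) z hz
    rwa [𝔾.inv_inv] at this
  -- non-composable terms vanish
  have zero1 : ∀ h : G, 𝔾.d h ≠ 𝔾.r g → α.act h (α.act g x * one (𝔾.inv h)) = 0 := by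
    intro h hne
    have m1 : α.act g x ∈ α.D (𝔾.r g) := (α.ideal g).subset ((α.bijOn g).mapsTo hx)
    have m2 : one (𝔾.inv h) ∈ α.D (𝔾.d h) := by
      have := (α.ideal (𝔾.inv h)).subset (hone (𝔾.inv h)).1
      rwa [𝔾.r_inv] at this
    rw [horth (𝔾.r g) (𝔾.d h) (𝔾.d_r g) (𝔾.d_d h) (fun e => hne e.symm) _ m1 _ m2, hzero]
  have zero2 : ∀ l : G, 𝔾.d l ≠ 𝔾.d g → α.act l (x * one (𝔾.inv l)) = 0 := by
    intro l hne
    have m1 : x ∈ α.D (𝔾.d g) := by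
      have := (α.ideal (𝔾.inv g)).subset hx
      rwa [𝔾.r_inv] at this
    have m2 : one (𝔾.inv l) ∈ α.D (𝔾.d l) := by
      have := (α.ideal (𝔾.inv l)).subset (hone (𝔾.inv l)).1
      rwa [𝔾.r_inv] at this
    rw [horth (𝔾.d g) (𝔾.d l) (𝔾.d_d g) (𝔾.d_d l) (fun e => hne e.symm) _ m1 _ m2, hzero]
  -- the key computation for composable h
  have key : ∀ h : G, 𝔾.d h = 𝔾.r g →
      α.act h (α.act g x * one (𝔾.inv h))
        = α.act (𝔾.mul h g) (x * one (𝔾.inv (𝔾.mul h g))) := by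
    intro h h1
    set l := 𝔾.mul h g with hl
    have hdl : 𝔾.d l = 𝔾.d g := 𝔾.d_mul h g h1
    have hlg : 𝔾.mul l (𝔾.inv g) = h := by
      rw [hl, 𝔾.mul_assoc' h g (𝔾.inv g) h1 (𝔾.r_inv g).symm, 𝔾.mul_inv, ← h1, 𝔾.mul_d]
    set u := one g * one (𝔾.inv h) with hu
    -- u ∈ D g and u ∈ D (inv h)
    have honeinvh : one (𝔾.inv h) ∈ α.D (𝔾.r g) := by
      have := (α.ideal (𝔾.inv h)).subset (hone (𝔾.inv h)).1
      rw [𝔾.r_inv] at this; rwa [h1] at this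
    have hug : u ∈ α.D g := (α.ideal g).mul_mem_right (hone g).1 honeinvh
    have honeg_rih : one g ∈ α.D (𝔾.r (𝔾.inv h)) := by
      rw [𝔾.r_inv, h1]; exact (α.ideal g).subset (hone g).1
    have huh : u ∈ α.D (𝔾.inv h) := (α.ideal (𝔾.inv h)).mul_mem_left honeg_rih (hone (𝔾.inv h)).1
    have hug' : u ∈ α.D (𝔾.inv (𝔾.inv g)) := by rw [𝔾.inv_inv]; exact hug
    set v := α.act (𝔾.inv g) u with hv
    have hvmem : v ∈ α.D (𝔾.inv g) := (α.bijOn (𝔾.inv g)).mapsTo hug'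
    have hactgv : α.act g v = u := rt1 g u hug
    -- x * v ∈ D (inv g)
    have hxr : x ∈ α.D (𝔾.r (𝔾.inv g)) := (α.ideal (𝔾.inv g)).subset hx
    have hxv : x * v ∈ α.D (𝔾.inv g) := (α.ideal (𝔾.inv g)).mul_mem_left hxr hvmem
    -- act g (x*v) = act g x * u
    have hgxv : α.act g (x * v) = α.act g x * u := by
      rw [α.map_mul g x hx v hvmem, hactgv]
    have hgx_g : α.act g x ∈ α.D g := (α.bijOn g).mapsTo hx
    have hgx_rih : α.act g x ∈ α.D (𝔾.r (𝔾.inv h)) := by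
      rw [𝔾.r_inv, h1]; exact (α.ideal g).subset hgx_g
    have hgxu_h : α.act g x * u ∈ α.D (𝔾.inv h) :=
      (α.ideal (𝔾.inv h)).mul_mem_left hgx_rih huh
    -- act g x * one (inv h) = act g x * u
    have hshort : α.act g x * one (𝔾.inv h) = α.act g x * u := by
      rw [hu, ← mul_assoc, ((hone g).2 (α.act g x) hgx_g).2]
    -- composition
    have hcomp : α.act h (α.act g (x * v)) = α.act l (x * v) :=
      α.comp_cond h g h1 (x * v) hxv (by rw [hgxv]; exact hgxu_h)
    have hxvl : x * v ∈ α.D (𝔾.inv l) :=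
      α.dom_cond h g h1 (x * v) hxv (by rw [hgxv]; exact hgxu_h)
    -- now show x * v = x * one (inv l)
    set y := x * one (𝔾.inv l) with hy
    have honeinvl_r : one (𝔾.inv l) ∈ α.D (𝔾.r (𝔾.inv g)) := by
      have := (α.ideal (𝔾.inv l)).subset (hone (𝔾.inv l)).1
      rw [𝔾.r_inv, hdl] at this; rwa [𝔾.r_inv]
    have hx_ril : x ∈ α.D (𝔾.r (𝔾.inv l)) := by
      rw [𝔾.r_inv, hdl]; rwa [𝔾.r_inv] at hxr
    have hyl : y ∈ α.D (𝔾.inv l) :=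
      (α.ideal (𝔾.inv l)).mul_mem_left hx_ril (hone (𝔾.inv l)).1
    have hyg : y ∈ α.D (𝔾.inv g) := (α.ideal (𝔾.inv g)).mul_mem_right hx honeinvl_r
    have hgy_g : α.act g y ∈ α.D g := (α.bijOn g).mapsTo hyg
    have hgy_h : α.act g y ∈ α.D (𝔾.inv h) := by
      have hdc := α.dom_cond l (𝔾.inv g) (by rw [hdl, 𝔾.r_inv]) (α.act g y)
        (by rw [𝔾.inv_inv]; exact hgy_g)
        (by rw [rt2 g y hyg]; exact hyl)
      rwa [hlg] at hdc
    have hgyu : α.act g y * u = α.act g y := by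
      rw [hu, ← mul_assoc, ((hone g).2 (α.act g y) hgy_g).2,
        ((hone (𝔾.inv h)).2 (α.act g y) hgy_h).2]
    have hgy_g' : α.act g y ∈ α.D (𝔾.inv (𝔾.inv g)) := by rw [𝔾.inv_inv]; exact hgy_g
    have hyv : y * v = y := by
      conv_lhs => rw [← rt2 g y hyg]
      rw [hv, ← α.map_mul (𝔾.inv g) (α.act g y) hgy_g' u hug', hgyu, rt2 g y hyg]
    have hxveq : x * v = x * one (𝔾.inv l) := by
      calc x * v = (x * v) * one (𝔾.inv l) := (((hone (𝔾.inv l)).2 _ hxvl).2).symm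
        _ = x * (one (𝔾.inv l) * v) := by rw [mul_assoc, ← hcentral (𝔾.inv l) v]
        _ = (x * one (𝔾.inv l)) * v := by rw [← mul_assoc]
        _ = x * one (𝔾.inv l) := hyv
    rw [hshort, ← hgxv, hcomp, hxveq]
  -- now the sum manipulation
  unfold traceMap
  have e1 : ∑ h : G, α.act h (α.act g x * one (𝔾.inv h))
      = ∑ h ∈ Finset.univ.filter (fun h => 𝔾.d h = 𝔾.r g),
          α.act h (α.act g x * one (𝔾.inv h)) :=
    (Finset.sum_filter_of_ne (fun h _ hne => by
      by_contra hc; exact hne (zero1 h hc))).symm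
  have e2 : ∑ l : G, α.act l (x * one (𝔾.inv l))
      = ∑ l ∈ Finset.univ.filter (fun l => 𝔾.d l = 𝔾.d g),
          α.act l (x * one (𝔾.inv l)) :=
    (Finset.sum_filter_of_ne (fun l _ hne => by
      by_contra hc; exact hne (zero2 l hc))).symm
  rw [e1, e2]
  refine Finset.sum_bij' (fun h _ => 𝔾.mul h g) (fun l _ => 𝔾.mul l (𝔾.inv g)) ?_ ?_ ?_ ?_ ?_
  · intro h hh
    simp only [Finset.mem_filter, Finset.mem_univ, true_and] at hh ⊢
    exact 𝔾.d_mul h g hh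
  · intro l hl
    simp only [Finset.mem_filter, Finset.mem_univ, true_and] at hl ⊢
    rw [𝔾.d_mul l (𝔾.inv g) (by rw [hl, 𝔾.r_inv]), 𝔾.d_inv]
  · intro h hh
    simp only [Finset.mem_filter, Finset.mem_univ, true_and] at hh
    show 𝔾.mul (𝔾.mul h g) (𝔾.inv g) = h
    rw [𝔾.mul_assoc' h g (𝔾.inv g) hh (𝔾.r_inv g).symm, 𝔾.mul_inv, ← hh, 𝔾.mul_d]
  · intro l hl
    simp only [Finset.mem_filter, Finset.mem_univ, true_and] at hl
    show 𝔾.mul (𝔾.mul l (𝔾.inv g)) g = l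
    rw [𝔾.mul_assoc' l (𝔾.inv g) g (by rw [hl, 𝔾.r_inv]) (𝔾.d_inv g), 𝔾.inv_mul,
      ← hl, 𝔾.mul_d]
  · intro h hh
    simp only [Finset.mem_filter, Finset.mem_univ, true_and] at hh
    exact key h hh
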